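/- arXiv:2210.16645 — 3 statements merged into one kernel-verified Lean document; each statement's English description precedes it below -/
import Mathlib

section
/- Modified Kuhn–Munkres theorem: Let G be a complete weighted bipartite graph on vertex sets V₁ of size m and V₂ of size n with nonnegative edge weights w, and let m_1,…,m_n be positive integers with ∑_j m_j = m. Suppose l : V₁ ∪ V₂ → ℝ is a feasible labeling, i.e. l(v₁) + l(v₂) ≥ w(v₁,v₂) for all v₁ ∈ V₁, v₂ ∈ V₂. If PM is a perfect pseudo-matching contained in the equality subgraph E_l = {(v₁,v₂) : l(v₁)+l(v₂) = w(v₁,v₂)}, then PM has maximum total weight among all perfect pseudo-matchings of G. -/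
open Finset

lemma fiber_sum {m n : ℕ} (g : Fin m → Fin n) (l2 : Fin n → ℝ) :
    ∑ i, l2 (g i) = ∑ j, ((univ.filter (fun i => g i = j)).card : ℝ) * l2 j := by
  rw [← Finset.sum_fiberwise univ g (fun i => l2 (g i))]
  refine Finset.sum_congr rfl fun j _ => ?_
  rw [Finset.sum_congr rfl (fun i hi => by
    rw [(Finset.mem_filter.mp hi).2]), Finset.sum_const, nsmul_eq_mul]

/-- Modified Kuhn–Munkres theorem: if `l` is a feasible labeling
and the perfect pseudo-matching `f` (fiber sizes `m_j`) uses only equality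
edges, then `f` has maximum weight among all perfect pseudo-matchings. -/
theorem stmt_4 (m n : ℕ) (mv : Fin n → ℕ) (hpos : ∀ j, 0 < mv j)
    (hsum : ∑ j, mv j = m)
    (w : Fin m → Fin n → ℝ) (hw : ∀ i j, 0 ≤ w i j)
    (l1 : Fin m → ℝ) (l2 : Fin n → ℝ)
    (hfeas : ∀ i j, w i j ≤ l1 i + l2 j)
    (f : Fin m → Fin n)
    (hfib : ∀ j, (univ.filter (fun i => f i = j)).card = mv j)
    (heq : ∀ i, l1 i + l2 (f i) = w i (f i)) :
    ∀ g : Fin m → Fin n,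
      (∀ j, (univ.filter (fun i => g i = j)).card = mv j) →
      ∑ i, w i (g i) ≤ ∑ i, w i (f i) := by
  intro g hg
  calc ∑ i, w i (g i) ≤ ∑ i, (l1 i + l2 (g i)) :=
        Finset.sum_le_sum fun i _ => hfeas i (g i)
    _ = ∑ i, l1 i + ∑ i, l2 (g i) := Finset.sum_add_distrib
    _ = ∑ i, l1 i + ∑ i, l2 (f i) := by
        rw [fiber_sum g l2, fiber_sum f l2]
        simp [hg, hfib]
    _ = ∑ i, (l1 i + l2 (f i)) := Finset.sum_add_distrib.symm
    _ = ∑ i, w i (f i) := Finset.sum_congr rfl fun i _ => heq i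
end

section
/- In the labeling update step of the modified Hungarian algorithm, let l be a feasible labeling, S ⊆ V₂ and T ⊆ V₁ with S nonempty and T ≠ V₁, and suppose every equality edge incident to S has its V₁-endpoint in T. Define α_l = min{ l(v₁)+l(v₂) − w(v₁,v₂) : v₁ ∉ T, v₂ ∈ S } and the updated labeling l'(v) = l(v) − α_l for v ∈ S, l'(v) = l(v) + α_l for v ∈ T, l'(v) = l(v) otherwise. Then α_l > 0, l' is a feasible labeling, all equality edges between T and S remain equality edges, and there exists a new equality edge (v₁, v₂) with v₁ ∉ T and v₂ ∈ S under l'. -/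
open Finset

/-- correctness of the labeling update step of the modified
Hungarian algorithm: `α_l > 0`, the updated labeling is feasible, equality
edges between `T` and `S` are preserved, and a new equality edge with
`v₁ ∉ T`, `v₂ ∈ S` appears. -/
theorem stmt_8 {V1 V2 : Type*} [Fintype V1] [Fintype V2]
    [DecidableEq V1] [DecidableEq V2]
    (w : V1 → V2 → ℝ) (l1 : V1 → ℝ) (l2 : V2 → ℝ)
    (hfeas : ∀ v1 v2, w v1 v2 ≤ l1 v1 + l2 v2)
    (S : Finset V2) (hS : S.Nonempty) (T : Finset V1) (hT : T ≠ univ)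
    (hN : ∀ v1 v2, v2 ∈ S → l1 v1 + l2 v2 = w v1 v2 → v1 ∈ T)
    (α : ℝ)
    (hα : IsLeast {x : ℝ | ∃ v1 v2, v1 ∉ T ∧ v2 ∈ S ∧
      x = l1 v1 + l2 v2 - w v1 v2} α) :
    0 < α ∧
    (∀ v1 v2, w v1 v2 ≤ (if v1 ∈ T then l1 v1 + α else l1 v1) +
      (if v2 ∈ S then l2 v2 - α else l2 v2)) ∧
    (∀ v1 ∈ T, ∀ v2 ∈ S, l1 v1 + l2 v2 = w v1 v2 →
      (l1 v1 + α) + (l2 v2 - α) = w v1 v2) ∧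
    (∃ v1, v1 ∉ T ∧ ∃ v2 ∈ S, l1 v1 + (l2 v2 - α) = w v1 v2) := by
  obtain ⟨⟨a1, a2, ha1, ha2, hαeq⟩, hlb⟩ := hα
  have hpos : 0 < α := by
    rcases lt_or_eq_of_le (sub_nonneg.mpr (hfeas a1 a2)) with h | h
    · rwa [hαeq]
    · exact absurd (hN a1 a2 ha2 (by linarith)) ha1
  refine ⟨hpos, ?_, ?_, ?_⟩
  · intro v1 v2
    by_cases h1 : v1 ∈ T <;> by_cases h2 : v2 ∈ S <;> simp [h1, h2]
    · linarith [hfeas v1 v2]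
    · linarith [hfeas v1 v2]
    · have := hlb ⟨v1, v2, h1, h2, rfl⟩
      linarith
    · exact hfeas v1 v2
  · intro v1 _ v2 _ h; linarith
  · exact ⟨a1, ha1, a2, ha2, by linarith⟩
end

section
/- Let n_1,…,n_m and m_1,…,m_n be positive integers with ∑_i n_i = ∑_j m_j = M, and C ∈ ℝ^{m×n}. The minimum of ∑_{i,j} X*_{ij} C_{ij} over nonnegative m×n matrices X* with row sums n_i/M and column sums m_j/M equals the minimum of ∑_{t,j} X†_{tj} C†_{tj} over nonnegative M×n matrices X† with all row sums equal to 1/M and column sums m_j/M, where C† is obtained from C by duplicating row i exactly n_i times. -/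
open Finset

/-- Proposition 3: the OT minimum with row marginals `n_i/M` and
column marginals `m_j/M` equals the OT minimum with uniform row marginals
`1/M` against the row-duplicated cost matrix `C†`. -/
theorem stmt_9 (M m n : ℕ) (nv : Fin m → ℕ) (mv : Fin n → ℕ)
    (hnpos : ∀ i, 0 < nv i) (hmpos : ∀ j, 0 < mv j)
    (hnsum : ∑ i, nv i = M) (hmsum : ∑ j, mv j = M)
    (blkR : Fin M → Fin m)
    (hblkR : ∀ (t : Fin M) (i : Fin m), blkR t = i ↔
      (∑ i' ∈ univ.filter (fun i' => i' < i), nv i') ≤ (t : ℕ) ∧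
      (t : ℕ) < ∑ i' ∈ univ.filter (fun i' => i' ≤ i), nv i')
    (C : Fin m → Fin n → ℝ)
    (Cdag : Fin M → Fin n → ℝ) (hCdag : ∀ t j, Cdag t j = C (blkR t) j) :
    ∃ v : ℝ,
      IsLeast {s : ℝ | ∃ X : Fin m → Fin n → ℝ,
        (∀ i j, 0 ≤ X i j) ∧ (∀ i, ∑ j, X i j = (nv i : ℝ) / M) ∧
        (∀ j, ∑ i, X i j = (mv j : ℝ) / M) ∧
        s = ∑ i, ∑ j, X i j * C i j} v ∧
      IsLeast {s : ℝ | ∃ Y : Fin M → Fin n → ℝ,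
        (∀ t j, 0 ≤ Y t j) ∧ (∀ t, ∑ j, Y t j = 1 / M) ∧
        (∀ j, ∑ t, Y t j = (mv j : ℝ) / M) ∧
        s = ∑ t, ∑ j, Y t j * Cdag t j} v := by
  classical
  have hcard : ∀ i : Fin m, (univ.filter (fun t : Fin M => blkR t = i)).card = nv i := by
    intro i
    have hsplit : (∑ i' ∈ univ.filter (fun i' => i' ≤ i), nv i')
        = (∑ i' ∈ univ.filter (fun i' => i' < i), nv i') + nv i := by
      have h : (univ.filter (fun i' => i' ≤ i) : Finset (Fin m))
          = insert i (univ.filter (fun i' => i' < i)) := by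
        ext x; simp [le_iff_lt_or_eq, or_comm, eq_comm]
      rw [h, Finset.sum_insert (by simp), add_comm]
    have hbM : (∑ i' ∈ univ.filter (fun i' => i' ≤ i), nv i') ≤ M := by
      rw [← hnsum]; exact Finset.sum_le_sum_of_subset (filter_subset _ _)
    have hb := Finset.card_bij (fun (t : Fin M) _ => (t : ℕ))
      (s := univ.filter (fun t : Fin M => blkR t = i))
      (t := Finset.Ico (∑ i' ∈ univ.filter (fun i' => i' < i), nv i')
        (∑ i' ∈ univ.filter (fun i' => i' ≤ i), nv i'))
      (fun t ht => by
        simp only [mem_filter, mem_univ, true_and] at ht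
        simpa [Finset.mem_Ico] using (hblkR t i).1 ht)
      (fun t₁ _ t₂ _ h => Fin.val_injective h)
      (fun x hx => by
        simp only [Finset.mem_Ico] at hx
        refine ⟨⟨x, lt_of_lt_of_le hx.2 hbM⟩, ?_, rfl⟩
        simp only [mem_filter, mem_univ, true_and]
        exact (hblkR _ i).2 ⟨hx.1, hx.2⟩)
    rw [hb, Nat.card_Ico, hsplit, Nat.add_sub_cancel_left]
  have hfib : ∀ (F : Fin M → ℝ),
      ∑ t, F t = ∑ i, ∑ t ∈ univ.filter (fun t => blkR t = i), F t :=
    fun F => (Finset.sum_fiberwise univ blkR F).symm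
  set S1 : Set ℝ := {s : ℝ | ∃ X : Fin m → Fin n → ℝ,
        (∀ i j, 0 ≤ X i j) ∧ (∀ i, ∑ j, X i j = (nv i : ℝ) / M) ∧
        (∀ j, ∑ i, X i j = (mv j : ℝ) / M) ∧
        s = ∑ i, ∑ j, X i j * C i j} with hS1
  set S2 : Set ℝ := {s : ℝ | ∃ Y : Fin M → Fin n → ℝ,
        (∀ t j, 0 ≤ Y t j) ∧ (∀ t, ∑ j, Y t j = 1 / M) ∧
        (∀ j, ∑ t, Y t j = (mv j : ℝ) / M) ∧
        s = ∑ t, ∑ j, Y t j * Cdag t j} with hS2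
  have hnR : ∀ i, ((nv i : ℝ)) ≠ 0 := fun i => Nat.cast_ne_zero.2 (hnpos i).ne'
  have hSeq : S1 = S2 := by
    ext s
    constructor
    · rintro ⟨X, hX0, hXr, hXc, rfl⟩
      refine ⟨fun t j => X (blkR t) j / nv (blkR t), ?_, ?_, ?_, ?_⟩
      · intro t j; exact div_nonneg (hX0 _ _) (Nat.cast_nonneg _)
      · intro t
        rw [← Finset.sum_div, hXr, div_div, mul_comm, ← div_div, div_self (hnR _)]
      · intro j
        rw [hfib (fun t => X (blkR t) j / nv (blkR t)), ← hXc j]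
        refine Finset.sum_congr rfl fun i _ => ?_
        have h1 : ∑ t ∈ univ.filter (fun t => blkR t = i), X (blkR t) j / nv (blkR t)
            = ∑ _t ∈ univ.filter (fun t => blkR t = i), X i j / nv i := by
          refine Finset.sum_congr rfl fun t ht => ?_
          simp only [mem_filter, mem_univ, true_and] at ht
          rw [ht]
        rw [h1, Finset.sum_const, hcard i, nsmul_eq_mul, mul_div_cancel₀ _ (hnR i)]
      · rw [hfib (fun t => ∑ j, X (blkR t) j / nv (blkR t) * Cdag t j)]
        refine Finset.sum_congr rfl fun i _ => ?_
        have h1 : ∑ t ∈ univ.filter (fun t => blkR t = i),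
              ∑ j, X (blkR t) j / nv (blkR t) * Cdag t j
            = ∑ _t ∈ univ.filter (fun t => blkR t = i), ∑ j, X i j / nv i * C i j := by
          refine Finset.sum_congr rfl fun t ht => ?_
          simp only [mem_filter, mem_univ, true_and] at ht
          refine Finset.sum_congr rfl fun j _ => ?_
          rw [hCdag, ht]
        rw [h1, Finset.sum_const, hcard i, nsmul_eq_mul, Finset.mul_sum]
        refine Finset.sum_congr rfl fun j _ => ?_
        field_simp
        rw [mul_div_assoc, div_self (hnR i), mul_one]
    · rintro ⟨Y, hY0, hYr, hYc, rfl⟩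
      refine ⟨fun i j => ∑ t ∈ univ.filter (fun t => blkR t = i), Y t j, ?_, ?_, ?_, ?_⟩
      · intro i j; exact Finset.sum_nonneg fun t _ => hY0 t j
      · intro i
        rw [Finset.sum_comm]
        have h1 : ∑ t ∈ univ.filter (fun t => blkR t = i), ∑ j, Y t j
            = ∑ _t ∈ univ.filter (fun t => blkR t = i), (1 : ℝ) / M :=
          Finset.sum_congr rfl fun t _ => hYr t
        rw [h1, Finset.sum_const, hcard i, nsmul_eq_mul, mul_one_div]
      · intro j; rw [← hfib (fun t => Y t j)]; exact hYc j
      · rw [hfib (fun t => ∑ j, Y t j * Cdag t j)]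
        refine Finset.sum_congr rfl fun i _ => ?_
        rw [Finset.sum_comm]
        refine Finset.sum_congr rfl fun j _ => ?_
        rw [Finset.sum_mul]
        refine Finset.sum_congr rfl fun t ht => ?_
        simp only [mem_filter, mem_univ, true_and] at ht
        rw [hCdag, ht]
  -- existence of the minimum over the (compact, nonempty) feasible set of S1
  set K : Set (Fin m → Fin n → ℝ) := {X |
    (∀ i j, 0 ≤ X i j) ∧ (∀ i, ∑ j, X i j = (nv i : ℝ) / M) ∧
    (∀ j, ∑ i, X i j = (mv j : ℝ) / M)} with hK
  have hMn : ∀ i : Fin m, (nv i : ℕ) ≤ M := fun i =>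
    hnsum ▸ Finset.single_le_sum (fun _ _ => Nat.zero_le _) (mem_univ i)
  have hMposn : ∀ _i : Fin m, 0 < M := fun i => lt_of_lt_of_le (hnpos i) (hMn i)
  have hMposm : ∀ _j : Fin n, 0 < M := fun j =>
    lt_of_lt_of_le (hmpos j)
      (hmsum ▸ Finset.single_le_sum (fun _ _ => Nat.zero_le _) (mem_univ j))
  have hKne : K.Nonempty := by
    refine ⟨fun i j => (nv i : ℝ) * mv j / M ^ 2, ?_, ?_, ?_⟩
    · intro i j; positivity
    · intro i
      have hM : ((M : ℝ)) ≠ 0 := Nat.cast_ne_zero.2 (hMposn i).ne'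
      rw [← Finset.sum_div, ← Finset.mul_sum]
      have hs : ∑ j, (mv j : ℝ) = M := by exact_mod_cast hmsum
      rw [hs, pow_two, ← div_div, mul_div_assoc, div_self hM, mul_one]
    · intro j
      have hM : ((M : ℝ)) ≠ 0 := Nat.cast_ne_zero.2 (hMposm j).ne'
      rw [← Finset.sum_div, ← Finset.sum_mul]
      have hs : ∑ i, (nv i : ℝ) = M := by exact_mod_cast hnsum
      rw [hs, pow_two, ← div_div, mul_comm, mul_div_assoc, div_self hM, mul_one]
  have hKcl : IsClosed K := by
    have hrep : K = (⋂ i, ⋂ j, {X : Fin m → Fin n → ℝ | 0 ≤ X i j}) ∩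
        ((⋂ i, {X : Fin m → Fin n → ℝ | ∑ j, X i j = (nv i : ℝ) / M}) ∩
         (⋂ j, {X : Fin m → Fin n → ℝ | ∑ i, X i j = (mv j : ℝ) / M})) := by
      ext X
      simp only [hK, Set.mem_setOf_eq, Set.mem_inter_iff, Set.mem_iInter]
    rw [hrep]
    exact ((isClosed_iInter fun i => isClosed_iInter fun j =>
        isClosed_le continuous_const (by fun_prop))).inter
      (((isClosed_iInter fun i => isClosed_eq (by fun_prop) continuous_const)).inter
       ((isClosed_iInter fun j => isClosed_eq (by fun_prop) continuous_const)))
  have hsub : K ⊆ Set.Icc (fun _ _ => (0 : ℝ)) (fun _ _ => (1 : ℝ)) := by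
    rintro X ⟨h0, hr, _⟩
    constructor
    · intro i j; exact h0 i j
    · intro i j
      have h1 : X i j ≤ ∑ j', X i j' :=
        Finset.single_le_sum (fun j' _ => h0 i j') (mem_univ j)
      have h2 : ((nv i : ℝ)) / M ≤ 1 := by
        have hM : (0 : ℝ) < M := by exact_mod_cast hMposn i
        rw [div_le_one hM]
        exact_mod_cast hMn i
      exact le_trans h1 (le_of_le_of_eq (le_of_eq (hr i)) rfl |>.trans h2)
  have hKcp : IsCompact K := IsCompact.of_isClosed_subset isCompact_Icc hKcl hsub
  have hf : Continuous (fun X : Fin m → Fin n → ℝ => ∑ i, ∑ j, X i j * C i j) := by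
    fun_prop
  obtain ⟨X0, hX0K, hmin⟩ := hKcp.exists_isMinOn hKne hf.continuousOn
  have hL : IsLeast S1 (∑ i, ∑ j, X0 i j * C i j) := by
    constructor
    · exact ⟨X0, hX0K.1, hX0K.2.1, hX0K.2.2, rfl⟩
    · rintro s ⟨X, h1, h2, h3, rfl⟩
      exact hmin ⟨h1, h2, h3⟩
  exact ⟨_, hL, hSeq ▸ hL⟩
end
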